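/- For every subfield F of the field ℝ of real numbers (in particular for F = ℝ and F = ℚ) there exists a q-Fano plane over F: there exist a 7-dimensional F-vector space V and a set 𝔅 of 3-dimensional F-subspaces of V such that every 2-dimensional F-subspace of V is contained in exactly one member of 𝔅. -/

import Mathlib

set_option maxHeartbeats 1000000

section eval
variable {α : Type*} (a0 a1 a2 a3 a4 a5 a6 : α)
@[simp] lemma qfVec_eval_0 : ![a0,a1,a2,a3,a4,a5,a6] (0 : Fin 7) = a0 := rfl
@[simp] lemma qfVec_evalmk_0 (h : 0 < 7) : ![a0,a1,a2,a3,a4,a5,a6] (⟨0, h⟩ : Fin 7) = a0 := rfl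
@[simp] lemma qfVec_eval_1 : ![a0,a1,a2,a3,a4,a5,a6] (1 : Fin 7) = a1 := rfl
@[simp] lemma qfVec_evalmk_1 (h : 1 < 7) : ![a0,a1,a2,a3,a4,a5,a6] (⟨1, h⟩ : Fin 7) = a1 := rfl
@[simp] lemma qfVec_eval_2 : ![a0,a1,a2,a3,a4,a5,a6] (2 : Fin 7) = a2 := rfl
@[simp] lemma qfVec_evalmk_2 (h : 2 < 7) : ![a0,a1,a2,a3,a4,a5,a6] (⟨2, h⟩ : Fin 7) = a2 := rfl
@[simp] lemma qfVec_eval_3 : ![a0,a1,a2,a3,a4,a5,a6] (3 : Fin 7) = a3 := rfl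
@[simp] lemma qfVec_evalmk_3 (h : 3 < 7) : ![a0,a1,a2,a3,a4,a5,a6] (⟨3, h⟩ : Fin 7) = a3 := rfl
@[simp] lemma qfVec_eval_4 : ![a0,a1,a2,a3,a4,a5,a6] (4 : Fin 7) = a4 := rfl
@[simp] lemma qfVec_evalmk_4 (h : 4 < 7) : ![a0,a1,a2,a3,a4,a5,a6] (⟨4, h⟩ : Fin 7) = a4 := rfl
@[simp] lemma qfVec_eval_5 : ![a0,a1,a2,a3,a4,a5,a6] (5 : Fin 7) = a5 := rfl
@[simp] lemma qfVec_evalmk_5 (h : 5 < 7) : ![a0,a1,a2,a3,a4,a5,a6] (⟨5, h⟩ : Fin 7) = a5 := rfl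
@[simp] lemma qfVec_eval_6 : ![a0,a1,a2,a3,a4,a5,a6] (6 : Fin 7) = a6 := rfl
@[simp] lemma qfVec_evalmk_6 (h : 6 < 7) : ![a0,a1,a2,a3,a4,a5,a6] (⟨6, h⟩ : Fin 7) = a6 := rfl

@[simp] lemma qfFinmk_0 (h : 0 < 7) : (⟨0, h⟩ : Fin 7) = (0 : Fin 7) := rfl
@[simp] lemma qfFinmk_1 (h : 1 < 7) : (⟨1, h⟩ : Fin 7) = (1 : Fin 7) := rfl
@[simp] lemma qfFinmk_2 (h : 2 < 7) : (⟨2, h⟩ : Fin 7) = (2 : Fin 7) := rfl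
@[simp] lemma qfFinmk_3 (h : 3 < 7) : (⟨3, h⟩ : Fin 7) = (3 : Fin 7) := rfl
@[simp] lemma qfFinmk_4 (h : 4 < 7) : (⟨4, h⟩ : Fin 7) = (4 : Fin 7) := rfl
@[simp] lemma qfFinmk_5 (h : 5 < 7) : (⟨5, h⟩ : Fin 7) = (5 : Fin 7) := rfl
@[simp] lemma qfFinmk_6 (h : 6 < 7) : (⟨6, h⟩ : Fin 7) = (6 : Fin 7) := rfl
end eval

variable {K : Type*} [Field K] [LinearOrder K] [IsStrictOrderedRing K]

/-- The 7-dimensional cross product, coming from octonion multiplication on the purely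
imaginary octonions. -/
def qfCross (x y : Fin 7 → K) : Fin 7 → K :=
  ![x 1 * y 2 - x 2 * y 1 + x 3 * y 4 - x 4 * y 3 - x 5 * y 6 + x 6 * y 5,
    - x 0 * y 2 + x 2 * y 0 + x 3 * y 5 + x 4 * y 6 - x 5 * y 3 - x 6 * y 4,
    x 0 * y 1 - x 1 * y 0 + x 3 * y 6 - x 4 * y 5 + x 5 * y 4 - x 6 * y 3,
    - x 0 * y 4 - x 1 * y 5 - x 2 * y 6 + x 4 * y 0 + x 5 * y 1 + x 6 * y 2,
    x 0 * y 3 - x 1 * y 6 + x 2 * y 5 - x 3 * y 0 - x 5 * y 2 + x 6 * y 1,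
    x 0 * y 6 + x 1 * y 3 - x 2 * y 4 - x 3 * y 1 + x 4 * y 2 - x 6 * y 0,
    - x 0 * y 5 + x 1 * y 4 + x 2 * y 3 - x 3 * y 2 - x 4 * y 1 + x 5 * y 0]

/-- The standard inner product on `Fin 7 → K`. -/
def qfDot (x y : Fin 7 → K) : K :=
  x 0 * y 0 + x 1 * y 1 + x 2 * y 2 + x 3 * y 3 + x 4 * y 4 + x 5 * y 5 + x 6 * y 6

lemma qfCross_add_left (x x' y : Fin 7 → K) :
    qfCross (x + x') y = qfCross x y + qfCross x' y := by
  funext i; fin_cases i <;> simp only [qfCross, qfDot, qfVec_eval_0, qfVec_eval_1, qfVec_eval_2, qfVec_eval_3,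
      qfVec_eval_4, qfVec_eval_5, qfVec_eval_6, qfVec_evalmk_0, qfVec_evalmk_1, qfVec_evalmk_2,
      qfVec_evalmk_3, qfVec_evalmk_4, qfVec_evalmk_5, qfVec_evalmk_6, qfFinmk_0, qfFinmk_1,
      qfFinmk_2, qfFinmk_3, qfFinmk_4, qfFinmk_5, qfFinmk_6, Pi.add_apply,
      Pi.smul_apply, Pi.neg_apply, Pi.sub_apply, Pi.zero_apply, smul_eq_mul] <;> ring

lemma qfCross_smul_left (c : K) (x y : Fin 7 → K) :
    qfCross (c • x) y = c • qfCross x y := by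
  funext i; fin_cases i <;> simp only [qfCross, qfDot, qfVec_eval_0, qfVec_eval_1, qfVec_eval_2, qfVec_eval_3,
      qfVec_eval_4, qfVec_eval_5, qfVec_eval_6, qfVec_evalmk_0, qfVec_evalmk_1, qfVec_evalmk_2,
      qfVec_evalmk_3, qfVec_evalmk_4, qfVec_evalmk_5, qfVec_evalmk_6, qfFinmk_0, qfFinmk_1,
      qfFinmk_2, qfFinmk_3, qfFinmk_4, qfFinmk_5, qfFinmk_6, Pi.add_apply,
      Pi.smul_apply, Pi.neg_apply, Pi.sub_apply, Pi.zero_apply, smul_eq_mul] <;> ring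

lemma qfCross_antisymm (x y : Fin 7 → K) : qfCross y x = - qfCross x y := by
  funext i; fin_cases i <;> simp only [qfCross, qfDot, qfVec_eval_0, qfVec_eval_1, qfVec_eval_2, qfVec_eval_3,
      qfVec_eval_4, qfVec_eval_5, qfVec_eval_6, qfVec_evalmk_0, qfVec_evalmk_1, qfVec_evalmk_2,
      qfVec_evalmk_3, qfVec_evalmk_4, qfVec_evalmk_5, qfVec_evalmk_6, qfFinmk_0, qfFinmk_1,
      qfFinmk_2, qfFinmk_3, qfFinmk_4, qfFinmk_5, qfFinmk_6, Pi.add_apply,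
      Pi.smul_apply, Pi.neg_apply, Pi.sub_apply, Pi.zero_apply, smul_eq_mul] <;> ring

lemma qfCross_self (x : Fin 7 → K) : qfCross x x = 0 := by
  funext i; fin_cases i <;> simp only [qfCross, qfDot, qfVec_eval_0, qfVec_eval_1, qfVec_eval_2, qfVec_eval_3,
      qfVec_eval_4, qfVec_eval_5, qfVec_eval_6, qfVec_evalmk_0, qfVec_evalmk_1, qfVec_evalmk_2,
      qfVec_evalmk_3, qfVec_evalmk_4, qfVec_evalmk_5, qfVec_evalmk_6, qfFinmk_0, qfFinmk_1,
      qfFinmk_2, qfFinmk_3, qfFinmk_4, qfFinmk_5, qfFinmk_6, Pi.add_apply,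
      Pi.smul_apply, Pi.neg_apply, Pi.sub_apply, Pi.zero_apply, smul_eq_mul] <;> ring

lemma qfCross_add_right (x y y' : Fin 7 → K) :
    qfCross x (y + y') = qfCross x y + qfCross x y' := by
  funext i; fin_cases i <;> simp only [qfCross, qfDot, qfVec_eval_0, qfVec_eval_1, qfVec_eval_2, qfVec_eval_3,
      qfVec_eval_4, qfVec_eval_5, qfVec_eval_6, qfVec_evalmk_0, qfVec_evalmk_1, qfVec_evalmk_2,
      qfVec_evalmk_3, qfVec_evalmk_4, qfVec_evalmk_5, qfVec_evalmk_6, qfFinmk_0, qfFinmk_1,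
      qfFinmk_2, qfFinmk_3, qfFinmk_4, qfFinmk_5, qfFinmk_6, Pi.add_apply,
      Pi.smul_apply, Pi.neg_apply, Pi.sub_apply, Pi.zero_apply, smul_eq_mul] <;> ring

lemma qfCross_smul_right (c : K) (x y : Fin 7 → K) :
    qfCross x (c • y) = c • qfCross x y := by
  funext i; fin_cases i <;> simp only [qfCross, qfDot, qfVec_eval_0, qfVec_eval_1, qfVec_eval_2, qfVec_eval_3,
      qfVec_eval_4, qfVec_eval_5, qfVec_eval_6, qfVec_evalmk_0, qfVec_evalmk_1, qfVec_evalmk_2,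
      qfVec_evalmk_3, qfVec_evalmk_4, qfVec_evalmk_5, qfVec_evalmk_6, qfFinmk_0, qfFinmk_1,
      qfFinmk_2, qfFinmk_3, qfFinmk_4, qfFinmk_5, qfFinmk_6, Pi.add_apply,
      Pi.smul_apply, Pi.neg_apply, Pi.sub_apply, Pi.zero_apply, smul_eq_mul] <;> ring

lemma qfCross_zero_right (x : Fin 7 → K) : qfCross x (0 : Fin 7 → K) = 0 := by
  funext i; fin_cases i <;> simp only [qfCross, qfDot, qfVec_eval_0, qfVec_eval_1, qfVec_eval_2, qfVec_eval_3,
      qfVec_eval_4, qfVec_eval_5, qfVec_eval_6, qfVec_evalmk_0, qfVec_evalmk_1, qfVec_evalmk_2,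
      qfVec_evalmk_3, qfVec_evalmk_4, qfVec_evalmk_5, qfVec_evalmk_6, qfFinmk_0, qfFinmk_1,
      qfFinmk_2, qfFinmk_3, qfFinmk_4, qfFinmk_5, qfFinmk_6, Pi.add_apply,
      Pi.smul_apply, Pi.neg_apply, Pi.sub_apply, Pi.zero_apply, smul_eq_mul] <;> ring

lemma qfDot_comm (x y : Fin 7 → K) : qfDot x y = qfDot y x := by
  simp only [qfDot]; ring

lemma qfDot_cross_left (x y : Fin 7 → K) : qfDot x (qfCross x y) = 0 := by
  simp only [qfCross, qfDot, qfVec_eval_0, qfVec_eval_1, qfVec_eval_2, qfVec_eval_3,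
      qfVec_eval_4, qfVec_eval_5, qfVec_eval_6, qfVec_evalmk_0, qfVec_evalmk_1, qfVec_evalmk_2,
      qfVec_evalmk_3, qfVec_evalmk_4, qfVec_evalmk_5, qfVec_evalmk_6, qfFinmk_0, qfFinmk_1,
      qfFinmk_2, qfFinmk_3, qfFinmk_4, qfFinmk_5, qfFinmk_6, Pi.add_apply,
      Pi.smul_apply, Pi.neg_apply, Pi.sub_apply, Pi.zero_apply, smul_eq_mul]; ring

lemma qfDot_cross_right (x y : Fin 7 → K) : qfDot y (qfCross x y) = 0 := by
  simp only [qfCross, qfDot, qfVec_eval_0, qfVec_eval_1, qfVec_eval_2, qfVec_eval_3,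
      qfVec_eval_4, qfVec_eval_5, qfVec_eval_6, qfVec_evalmk_0, qfVec_evalmk_1, qfVec_evalmk_2,
      qfVec_evalmk_3, qfVec_evalmk_4, qfVec_evalmk_5, qfVec_evalmk_6, qfFinmk_0, qfFinmk_1,
      qfFinmk_2, qfFinmk_3, qfFinmk_4, qfFinmk_5, qfFinmk_6, Pi.add_apply,
      Pi.smul_apply, Pi.neg_apply, Pi.sub_apply, Pi.zero_apply, smul_eq_mul]; ring

lemma qfDot_add_right (x y y' : Fin 7 → K) : qfDot x (y + y') = qfDot x y + qfDot x y' := by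
  simp only [qfCross, qfDot, qfVec_eval_0, qfVec_eval_1, qfVec_eval_2, qfVec_eval_3,
      qfVec_eval_4, qfVec_eval_5, qfVec_eval_6, qfVec_evalmk_0, qfVec_evalmk_1, qfVec_evalmk_2,
      qfVec_evalmk_3, qfVec_evalmk_4, qfVec_evalmk_5, qfVec_evalmk_6, qfFinmk_0, qfFinmk_1,
      qfFinmk_2, qfFinmk_3, qfFinmk_4, qfFinmk_5, qfFinmk_6, Pi.add_apply,
      Pi.smul_apply, Pi.neg_apply, Pi.sub_apply, Pi.zero_apply, smul_eq_mul]; ring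

lemma qfDot_smul_right (c : K) (x y : Fin 7 → K) : qfDot x (c • y) = c * qfDot x y := by
  simp only [qfCross, qfDot, qfVec_eval_0, qfVec_eval_1, qfVec_eval_2, qfVec_eval_3,
      qfVec_eval_4, qfVec_eval_5, qfVec_eval_6, qfVec_evalmk_0, qfVec_evalmk_1, qfVec_evalmk_2,
      qfVec_evalmk_3, qfVec_evalmk_4, qfVec_evalmk_5, qfVec_evalmk_6, qfFinmk_0, qfFinmk_1,
      qfFinmk_2, qfFinmk_3, qfFinmk_4, qfFinmk_5, qfFinmk_6, Pi.add_apply,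
      Pi.smul_apply, Pi.neg_apply, Pi.sub_apply, Pi.zero_apply, smul_eq_mul]; ring

/-- The key identity `x × (x × y) = ⟨x,y⟩ • x - ⟨x,x⟩ • y`. -/
lemma qfCross_cross_self (x y : Fin 7 → K) :
    qfCross x (qfCross x y) = qfDot x y • x - qfDot x x • y := by
  funext i; fin_cases i <;> simp only [qfCross, qfDot, qfVec_eval_0, qfVec_eval_1, qfVec_eval_2, qfVec_eval_3,
      qfVec_eval_4, qfVec_eval_5, qfVec_eval_6, qfVec_evalmk_0, qfVec_evalmk_1, qfVec_evalmk_2,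
      qfVec_evalmk_3, qfVec_evalmk_4, qfVec_evalmk_5, qfVec_evalmk_6, qfFinmk_0, qfFinmk_1,
      qfFinmk_2, qfFinmk_3, qfFinmk_4, qfFinmk_5, qfFinmk_6, Pi.add_apply,
      Pi.smul_apply, Pi.neg_apply, Pi.sub_apply, Pi.zero_apply, smul_eq_mul] <;> ring

lemma qfSq_zero_of_sum (a b c d e f g : K)
    (h : a * a + b * b + c * c + d * d + e * e + f * f + g * g = 0) :
    a = 0 ∧ b = 0 ∧ c = 0 ∧ d = 0 ∧ e = 0 ∧ f = 0 ∧ g = 0 := by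
  have key : ∀ t : K, t ^ 2 = 0 → t = 0 := fun t ht => by
    have := pow_eq_zero_iff (n := 2) (by norm_num) |>.mp ht; exact this
  refine ⟨key a ?_, key b ?_, key c ?_, key d ?_, key e ?_, key f ?_, key g ?_⟩ <;>
    nlinarith [sq_nonneg a, sq_nonneg b, sq_nonneg c, sq_nonneg d, sq_nonneg e, sq_nonneg f,
      sq_nonneg g]

lemma qfDot_self_eq_zero {x : Fin 7 → K} (h : qfDot x x = 0) : x = 0 := by
  simp only [qfDot] at h
  obtain ⟨h0, h1, h2, h3, h4, h5, h6⟩ := qfSq_zero_of_sum _ _ _ _ _ _ _ h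
  funext i
  fin_cases i
  · exact h0
  · exact h1
  · exact h2
  · exact h3
  · exact h4
  · exact h5
  · exact h6

theorem exists_qFano_linearOrderedField (K : Type*) [Field K] [LinearOrder K] [IsStrictOrderedRing K] :
    ∃ B : Set (Submodule K (Fin 7 → K)),
      Module.finrank K (Fin 7 → K) = 7 ∧
      (∀ b ∈ B, Module.finrank K ↥b = 3) ∧
      (∀ U : Submodule K (Fin 7 → K), Module.finrank K ↥U = 2 →
        ∃! b, b ∈ B ∧ U ≤ b) := by
  classical
  refine ⟨{b | Module.finrank K ↥b = 3 ∧ ∀ x ∈ b, ∀ y ∈ b, qfCross x y ∈ b},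
    by simp [Module.finrank_pi], fun b hb => hb.1, ?_⟩
  intro U hU
  -- a basis of `U`, viewed inside the ambient space
  obtain bU := Module.finBasisOfFinrankEq K ↥U hU
  set u : Fin 7 → K := ((bU 0 : ↥U) : Fin 7 → K) with hu_def
  set v : Fin 7 → K := ((bU 1 : ↥U) : Fin 7 → K) with hv_def
  set w : Fin 7 → K := qfCross u v with hw_def
  have hli2 : LinearIndependent K (fun i : Fin 2 => ((bU i : ↥U) : Fin 7 → K)) :=
    bU.linearIndependent.map' U.subtype (Submodule.ker_subtype U)
  -- `w ≠ 0`
  have hw0 : w ≠ 0 := by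
    intro hw
    have hid := qfCross_cross_self u v
    rw [← hw_def, hw, qfCross_zero_right] at hid
    have hcomb : qfDot u v • u - qfDot u u • v = 0 := hid.symm
    have := Fintype.linearIndependent_iff.mp hli2 ![qfDot u v, - qfDot u u] ?_ 1
    · have hneg : - qfDot u u = 0 := this
      have huu : qfDot u u = 0 := neg_eq_zero.mp hneg
      have hu0 : u = 0 := qfDot_self_eq_zero huu
      exact hli2.ne_zero 0 hu0
    · rw [Fin.sum_univ_two]
      simp only [Matrix.cons_val_zero, Matrix.cons_val_one, Matrix.head_cons, neg_smul]
      rw [← sub_eq_add_neg]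
      exact hcomb
  have hww : qfDot w w ≠ 0 := fun h => hw0 (qfDot_self_eq_zero h)
  have hwu : qfDot w u = 0 := by rw [qfDot_comm]; exact qfDot_cross_left u v
  have hwv : qfDot w v = 0 := by rw [qfDot_comm]; exact qfDot_cross_right u v
  -- `u, v, w` are linearly independent
  have hli3 : LinearIndependent K ![u, v, w] := by
    rw [Fintype.linearIndependent_iff]
    intro g hg
    have hsum : g 0 • u + g 1 • v + g 2 • w = 0 := by
      have := hg
      rwa [Fin.sum_univ_three, Matrix.cons_val_zero, Matrix.cons_val_one, Matrix.cons_val_zero] at this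
    have hg2 : g 2 = 0 := by
      have hdot : qfDot w (g 0 • u + g 1 • v + g 2 • w) = 0 := by
        rw [hsum]; simp [qfDot]
      rw [qfDot_add_right, qfDot_add_right, qfDot_smul_right, qfDot_smul_right,
        qfDot_smul_right, hwu, hwv] at hdot
      have : g 2 * qfDot w w = 0 := by linarith
      exact (mul_eq_zero.mp this).resolve_right hww
    have hsum2 : g 0 • u + g 1 • v = 0 := by
      rw [hg2, zero_smul, add_zero] at hsum; exact hsum
    have h01 := Fintype.linearIndependent_iff.mp hli2 ![g 0, g 1] ?_
    · intro i
      fin_cases i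
      · exact h01 0
      · exact h01 1
      · exact hg2
    · rw [Fin.sum_univ_two]
      exact hsum2
  set b : Submodule K (Fin 7 → K) := Submodule.span K (Set.range ![u, v, w]) with hb_def
  have hub : u ∈ b := Submodule.subset_span ⟨0, rfl⟩
  have hvb : v ∈ b := Submodule.subset_span ⟨1, rfl⟩
  have hwb : w ∈ b := Submodule.subset_span ⟨2, rfl⟩
  have hrank3 : Module.finrank K ↥b = 3 := by
    rw [hb_def]
    simpa using finrank_span_eq_card hli3
  -- products of generators lie in `b`
  have hgen : ∀ i j : Fin 3, qfCross (![u, v, w] i) (![u, v, w] j) ∈ b := by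
    have huw : qfCross u w ∈ b := by
      rw [hw_def, qfCross_cross_self]
      exact Submodule.sub_mem _ (Submodule.smul_mem _ _ hub) (Submodule.smul_mem _ _ hvb)
    have hvw : qfCross v w ∈ b := by
      have : qfCross v w = qfDot v v • u - qfDot v u • v := by
        rw [hw_def, show qfCross u v = - qfCross v u from qfCross_antisymm v u,
          show qfCross v (-qfCross v u) = (-1 : K) • qfCross v (qfCross v u) by
            rw [← qfCross_smul_right]; congr 1; funext k; simp,
          qfCross_cross_self]
        funext k; simp only [Pi.smul_apply, Pi.sub_apply, smul_eq_mul]; ring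
      rw [this]
      exact Submodule.sub_mem _ (Submodule.smul_mem _ _ hub) (Submodule.smul_mem _ _ hvb)
    intro i j
    fin_cases i <;> fin_cases j
    · show qfCross u u ∈ b
      rw [show qfCross u u = 0 from qfCross_self u]; exact Submodule.zero_mem _
    · exact hwb
    · exact huw
    · show qfCross v u ∈ b
      rw [show qfCross v u = - qfCross u v from qfCross_antisymm u v]
      exact Submodule.neg_mem _ hwb
    · show qfCross v v ∈ b
      rw [show qfCross v v = 0 from qfCross_self v]; exact Submodule.zero_mem _
    · exact hvw
    · show qfCross w u ∈ b
      rw [show qfCross w u = - qfCross u w from qfCross_antisymm u w]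
      exact Submodule.neg_mem _ huw
    · show qfCross w v ∈ b
      rw [show qfCross w v = - qfCross v w from qfCross_antisymm v w]
      exact Submodule.neg_mem _ hvw
    · show qfCross w w ∈ b
      rw [show qfCross w w = 0 from qfCross_self w]; exact Submodule.zero_mem _
  have hclose : ∀ x ∈ b, ∀ y ∈ b, qfCross x y ∈ b := by
    intro x hx y hy
    induction hx, hy using Submodule.span_induction₂ with
    | mem_mem x y hx hy =>
      obtain ⟨i, rfl⟩ := hx; obtain ⟨j, rfl⟩ := hy; exact hgen i j
    | zero_left y hy =>
      rw [show qfCross 0 y = - qfCross y 0 from qfCross_antisymm y 0, qfCross_zero_right]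
      simpa using Submodule.zero_mem b
    | zero_right x hx => rw [qfCross_zero_right]; exact Submodule.zero_mem _
    | add_left x y z hx hy hz h1 h2 => rw [qfCross_add_left]; exact Submodule.add_mem _ h1 h2
    | add_right x y z hx hy hz h1 h2 => rw [qfCross_add_right]; exact Submodule.add_mem _ h1 h2
    | smul_left r x y hx hy h => rw [qfCross_smul_left]; exact Submodule.smul_mem _ _ h
    | smul_right r x y hx hy h => rw [qfCross_smul_right]; exact Submodule.smul_mem _ _ h
  -- `U ≤ b`
  have hUspan : U = Submodule.span K (Set.range (fun i : Fin 2 => ((bU i : ↥U) : Fin 7 → K))) := by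
    conv_lhs => rw [← Submodule.map_subtype_top U]
    rw [← bU.span_eq, Submodule.map_span, ← Set.range_comp]
    rfl
  have hUb : U ≤ b := by
    rw [hUspan]
    refine Submodule.span_le.mpr ?_
    rintro x ⟨i, rfl⟩
    fin_cases i
    · exact hub
    · exact hvb
  refine ⟨b, ⟨⟨hrank3, hclose⟩, hUb⟩, ?_⟩
  rintro b' ⟨⟨hb'3, hb'c⟩, hUb'⟩
  have hub' : u ∈ b' := hUb' (bU 0).2
  have hvb' : v ∈ b' := hUb' (bU 1).2
  have hwb' : w ∈ b' := hb'c u hub' v hvb'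
  have hle : b ≤ b' := by
    rw [hb_def]
    refine Submodule.span_le.mpr ?_
    rintro x ⟨i, rfl⟩
    fin_cases i
    · exact hub'
    · exact hvb'
    · exact hwb'
  exact (Submodule.eq_of_le_of_finrank_le hle (by rw [hb'3, hrank3])).symm

set_option synthInstance.maxHeartbeats 1000000 in
set_option maxHeartbeats 1000000 in
/-- Over every subfield `F` of `ℝ` (in particular over `ℝ` and `ℚ`) there exists a q-Fano
plane (a `2-(7,3,1)` subspace design): a set `𝔅` of 3-dimensional subspaces of a
7-dimensional `F`-vector space such that every 2-dimensional subspace is contained in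
exactly one member of `𝔅`. -/
theorem exists_qFano_subfield_real (F : Subfield ℝ) :
    ∃ B : Set (Submodule F (Fin 7 → F)),
      Module.finrank F (Fin 7 → F) = 7 ∧
      (∀ b ∈ B, Module.finrank F ↥b = 3) ∧
      (∀ U : Submodule F (Fin 7 → F), Module.finrank F ↥U = 2 →
        ∃! b, b ∈ B ∧ U ≤ b) := by
  exact exists_qFano_linearOrderedField ↥F
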